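/- Let u = (−1 + i√3)/2 ∈ ℂ, and let A₅ = [[1,0,0,0,0],[−4,1,0,0,0],[6,−3,1,0,0],[−4,3,−2,1,0],[1,−1,1,−1,1]], B₅ = [[1,u,u²,u³,u⁴],[0,1,2u,3u²,4u³],[0,0,1,3u,6u²],[0,0,0,1,4u],[0,0,0,0,1]] in SL(5,ℂ). Then for every t ∈ ℂ with t ≠ 0 and t ≠ 1, det(I − t⁻¹·A₅·B₅⁻¹·A₅⁻¹ + A₅·B₅⁻¹·A₅⁻¹·B₅ − t·B₅ + B₅·A₅·B₅⁻¹·A₅⁻¹) divided by det(t·B₅ − I) equals −(1/t⁵)·(t−1)·(t⁴−9t³+44t²−9t+1). That is, the twisted Alexander invariant Δ_{K,ρ₅}(t) = −(1/t⁵)(t−1)(t⁴−9t³+44t²−9t+1). -/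

import Mathlib

open Matrix

noncomputable def u41 : ℂ := (-1 + Complex.I * Real.sqrt 3) / 2

noncomputable def A5 : Matrix (Fin 5) (Fin 5) ℂ :=
  !![1, 0, 0, 0, 0; -4, 1, 0, 0, 0; 6, -3, 1, 0, 0; -4, 3, -2, 1, 0; 1, -1, 1, -1, 1]

noncomputable def B5 : Matrix (Fin 5) (Fin 5) ℂ :=
  !![1, u41, u41 ^ 2, u41 ^ 3, u41 ^ 4; 0, 1, 2 * u41, 3 * u41 ^ 2, 4 * u41 ^ 3;
     0, 0, 1, 3 * u41, 6 * u41 ^ 2; 0, 0, 0, 1, 4 * u41; 0, 0, 0, 0, 1]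

lemma hu : u41 ^ 2 + u41 + 1 = 0 := by
  have h1 : (Complex.I)^2 = -1 := Complex.I_sq
  have h2 : ((Real.sqrt 3 : ℝ) : ℂ)^2 = 3 := by
    rw [← Complex.ofReal_pow, Real.sq_sqrt (by norm_num : (3:ℝ) ≥ 0)]; norm_num
  unfold u41
  linear_combination (3/4 : ℂ) * h1 + (Complex.I^2/4) * h2

lemma hu2 : u41 ^ 2 = -1 - u41 := by linear_combination hu
lemma hu3 : u41 ^ 3 = 1 := by linear_combination (u41 - 1) * hu
lemma hu4 : u41 ^ 4 = u41 := by linear_combination (u41^2 - u41) * hu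
lemma hu5 : u41 ^ 5 = -1 - u41 := by linear_combination (u41^3 - u41^2 + 1) * hu
lemma hu6 : u41 ^ 6 = 1 := by linear_combination (u41^4 - u41^3 + u41 - 1) * hu
lemma hu7 : u41 ^ 7 = u41 := by linear_combination (u41^5 - u41^4 + u41^2 - u41) * hu
lemma hu8 : u41 ^ 8 = -1 - u41 := by
  linear_combination (u41^6 - u41^5 + u41^3 - u41^2 + 1) * hu

section VecEval
variable {α : Type*}
lemma vA (a b c d : α) : ![a,b,c,d] 0 = a := rfl
lemma vB (a b c d : α) : ![a,b,c,d] 1 = b := rfl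
lemma vC (a b c d : α) : ![a,b,c,d] 2 = c := rfl
lemma vD (a b c d : α) : ![a,b,c,d] 3 = d := rfl
lemma wA (a b c d e : α) : ![a,b,c,d,e] 0 = a := rfl
lemma wB (a b c d e : α) : ![a,b,c,d,e] 1 = b := rfl
lemma wC (a b c d e : α) : ![a,b,c,d,e] 2 = c := rfl
lemma wD (a b c d e : α) : ![a,b,c,d,e] 3 = d := rfl
lemma wE (a b c d e : α) : ![a,b,c,d,e] 4 = e := rfl
end VecEval

set_option maxHeartbeats 1000000 in
lemma det_fin_four (M : Matrix (Fin 4) (Fin 4) ℂ) : det M = M 0 0 * M 1 1 * M 2 2 * M 3 3 - M 0 0 * M 1 1 * M 2 3 * M 3 2 - M 0 0 * M 1 2 * M 2 1 * M 3 3 + M 0 0 * M 1 2 * M 2 3 * M 3 1 + M 0 0 * M 1 3 * M 2 1 * M 3 2 - M 0 0 * M 1 3 * M 2 2 * M 3 1 - M 0 1 * M 1 0 * M 2 2 * M 3 3 + M 0 1 * M 1 0 * M 2 3 * M 3 2 + M 0 1 * M 1 2 * M 2 0 * M 3 3 - M 0 1 * M 1 2 * M 2 3 * M 3 0 - M 0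 1 * M 1 3 * M 2 0 * M 3 2 + M 0 1 * M 1 3 * M 2 2 * M 3 0 + M 0 2 * M 1 0 * M 2 1 * M 3 3 - M 0 2 * M 1 0 * M 2 3 * M 3 1 - M 0 2 * M 1 1 * M 2 0 * M 3 3 + M 0 2 * M 1 1 * M 2 3 * M 3 0 + M 0 2 * M 1 3 * M 2 0 * M 3 1 - M 0 2 * M 1 3 * M 2 1 * M 3 0 - M 0 3 * M 1 0 * M 2 1 * M 3 2 + M 0 3 * M 1 0 * M 2 2 * M 3 1 + M 0 3 * M 1 1 * M 2 0 * M 3 2 - M 0 3 * M 1 1 * M 2 2 * M 3 0 - M 0 3 * M 1 2 * M 2 0 * M 3 1 + M 0 3 * M 1 2 * M 2 1 * M 3 0 := by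
  rw [det_succ_row_zero]
  simp [Fin.sum_univ_succ, det_fin_three, Fin.succAbove, show ((2:Fin 3)).succ = 3 from rfl,
    show ((1:Fin 3)).succ = 2 from rfl, show Fin.castSucc (2:Fin 3) = (2:Fin 4) from rfl,
    show Fin.castSucc (1:Fin 3) = (1:Fin 4) from rfl,
    show Fin.castSucc (0:Fin 3) = (0:Fin 4) from rfl]
  ring

set_option maxHeartbeats 1000000 in
lemma det_fin_five_exp (M : Matrix (Fin 5) (Fin 5) ℂ) :
    det M = M 0 0 * det (M.submatrix Fin.succ ((0:Fin 5).succAbove))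
          - M 0 1 * det (M.submatrix Fin.succ ((1:Fin 5).succAbove))
          + M 0 2 * det (M.submatrix Fin.succ ((2:Fin 5).succAbove))
          - M 0 3 * det (M.submatrix Fin.succ ((3:Fin 5).succAbove))
          + M 0 4 * det (M.submatrix Fin.succ ((4:Fin 5).succAbove)) := by
  rw [det_succ_row_zero]
  simp [Fin.sum_univ_succ, show ((2:Fin 4)).succ = 3 from rfl,
    show ((3:Fin 4)).succ = 4 from rfl, show (Fin.succ (2:Fin 3)).succ = (4:Fin 5) from rfl,
    show ((1:Fin 4)).succ = 2 from rfl, show Fin.castSucc (3:Fin 4) = (3:Fin 5) from rfl,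
    show Fin.castSucc (2:Fin 4) = (2:Fin 5) from rfl,
    show Fin.castSucc (1:Fin 4) = (1:Fin 5) from rfl,
    show Fin.castSucc (0:Fin 4) = (0:Fin 5) from rfl]
  ring

noncomputable def Binv : Matrix (Fin 5) (Fin 5) ℂ :=
  !![1, -u41, u41 ^ 2, -u41 ^ 3, u41 ^ 4; 0, 1, -2 * u41, 3 * u41 ^ 2, -4 * u41 ^ 3;
     0, 0, 1, -3 * u41, 6 * u41 ^ 2; 0, 0, 0, 1, -4 * u41; 0, 0, 0, 0, 1]

noncomputable def Ainv : Matrix (Fin 5) (Fin 5) ℂ :=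
  !![1, 0, 0, 0, 0; 4, 1, 0, 0, 0; 6, 3, 1, 0, 0; 4, 3, 2, 1, 0; 1, 1, 1, 1, 1]

set_option maxHeartbeats 1000000 in
lemma hB5inv : B5⁻¹ = Binv := by
  apply Matrix.inv_eq_right_inv
  ext i j
  fin_cases i <;> fin_cases j <;>
    simp [B5, Binv, Matrix.mul_apply, Fin.sum_univ_succ, Matrix.one_apply] <;> ring

set_option maxHeartbeats 1000000 in
lemma hA5inv : A5⁻¹ = Ainv := by
  apply Matrix.inv_eq_right_inv
  ext i j
  fin_cases i <;> fin_cases j <;>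
    simp [A5, Ainv, Matrix.mul_apply, Fin.sum_univ_succ, Matrix.one_apply] <;> ring

noncomputable def Wr : Matrix (Fin 5) (Fin 5) ℂ :=
  !![
    1, (-1)*u41, (-1) + (-1)*u41, (-1), u41;
    (-4), 1 + 4*u41, 4 + 2*u41, 1 + (-3)*u41, (-4) + (-4)*u41;
    6, (-3) + (-6)*u41, (-5), 3 + 6*u41, 6;
    (-4), 3 + 4*u41, 2 + (-2)*u41, (-4) + (-3)*u41, 4*u41;
    1, (-1) + (-1)*u41, u41, 1, (-1) + (-1)*u41]

noncomputable def Xr : Matrix (Fin 5) (Fin 5) ℂ :=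
  !![
    (-9) + (-9)*u41, (-6) + (-3)*u41, (-3), (-1) + u41, u41;
    24 + 12*u41, 12 + (-3)*u41, 2 + (-8)*u41, (-3) + (-7)*u41, (-4) + (-4)*u41;
    (-18), (-3) + 12*u41, 7 + 12*u41, 9 + 6*u41, 6;
    4 + (-4)*u41, (-3) + (-7)*u41, (-6) + (-4)*u41, (-4) + u41, 4*u41;
    u41, 1 + u41, 1, (-1)*u41, (-1) + (-1)*u41]

noncomputable def Br : Matrix (Fin 5) (Fin 5) ℂ :=
  !![
    1, u41, (-1) + (-1)*u41, 1, u41;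
    0, 1, 2*u41, (-3) + (-3)*u41, 4;
    0, 0, 1, 3*u41, (-6) + (-6)*u41;
    0, 0, 0, 1, 4*u41;
    0, 0, 0, 0, 1]

noncomputable def XBr : Matrix (Fin 5) (Fin 5) ℂ :=
  !![
    (-9) + (-9)*u41, 3 + (-3)*u41, 3 + 3*u41, (-1) + u41, (-1) + (-1)*u41;
    24 + 12*u41, 9*u41, (-4) + (-2)*u41, (-1)*u41, 0;
    (-18), (-3) + (-6)*u41, 1, 0, 0;
    4 + (-4)*u41, 1 + u41, 0, 0, 0;
    u41, 0, 0, 0, 0]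

noncomputable def BAr : Matrix (Fin 5) (Fin 5) ℂ :=
  !![
    (-9) + (-9)*u41, 6 + 3*u41, (-3), 1 + (-1)*u41, u41;
    12 + 24*u41, (-12) + (-15)*u41, 10 + 8*u41, (-7) + (-3)*u41, 4;
    (-18)*u41, 3 + 15*u41, (-5) + (-12)*u41, 6 + 9*u41, (-6) + (-6)*u41;
    (-4) + 4*u41, 3 + (-4)*u41, (-2) + 4*u41, 1 + (-4)*u41, 4*u41;
    1, (-1), 1, (-1), 1]

noncomputable def Pr : Matrix (Fin 5) (Fin 5) ℂ :=
  !![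
    (-9) + (-9)*u41, (-3) + 3*u41, 3 + 3*u41, 1 + (-1)*u41, (-1) + (-1)*u41;
    12 + 24*u41, 12 + (-3)*u41, (-8) + (-10)*u41, (-4) + 3*u41, 4 + 4*u41;
    (-18)*u41, (-15) + (-3)*u41, 7 + 12*u41, 6 + (-3)*u41, (-6) + (-6)*u41;
    (-4) + 4*u41, 7 + 4*u41, (-2) + (-6)*u41, (-4) + u41, 4 + 4*u41;
    1, (-1) + (-1)*u41, u41, 1, (-1) + (-1)*u41]

noncomputable def BXr : Matrix (Fin 5) (Fin 5) ℂ :=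
  !![
    16*u41, 8 + 8*u41, 4, (-2)*u41, (-1) + (-1)*u41;
    (-32)*u41, (-20) + (-20)*u41, (-12), 7*u41, 4 + 4*u41;
    24*u41, 18 + 18*u41, 13, (-9)*u41, (-6) + (-6)*u41;
    (-8)*u41, (-7) + (-7)*u41, (-6), 5*u41, 4 + 4*u41;
    u41, 1 + u41, 1, (-1)*u41, (-1) + (-1)*u41]

set_option maxHeartbeats 2000000 in
lemma hW : A5 * Binv = Wr := by
  ext i j
  fin_cases i <;> fin_cases j <;>
    simp [A5, Binv, Wr, Matrix.mul_apply, Fin.sum_univ_succ, Matrix.vecHead, Matrix.vecTail] <;> ring_nf <;> (try simp only [hu8, hu7, hu6, hu5, hu4, hu3, hu2]) <;> (try ring_nf)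


set_option maxHeartbeats 2000000 in
lemma hX : Wr * Ainv = Xr := by
  ext i j
  fin_cases i <;> fin_cases j <;>
    simp [Wr, Ainv, Xr, Matrix.mul_apply, Fin.sum_univ_succ, Matrix.vecHead, Matrix.vecTail] <;> ring_nf <;> (try simp only [hu8, hu7, hu6, hu5, hu4, hu3, hu2]) <;> (try ring_nf)


set_option maxHeartbeats 2000000 in
lemma hXB : Xr * B5 = XBr := by
  ext i j
  fin_cases i <;> fin_cases j <;>
    simp [Xr, B5, XBr, Matrix.mul_apply, Fin.sum_univ_succ, Matrix.vecHead, Matrix.vecTail] <;> ring_nf <;> (try simp only [hu8, hu7, hu6, hu5, hu4, hu3, hu2]) <;> (try ring_nf)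


set_option maxHeartbeats 2000000 in
lemma hBA : B5 * A5 = BAr := by
  ext i j
  fin_cases i <;> fin_cases j <;>
    simp [B5, A5, BAr, Matrix.mul_apply, Fin.sum_univ_succ, Matrix.vecHead, Matrix.vecTail] <;> ring_nf <;> (try simp only [hu8, hu7, hu6, hu5, hu4, hu3, hu2]) <;> (try ring_nf)


set_option maxHeartbeats 2000000 in
lemma hP : BAr * Binv = Pr := by
  ext i j
  fin_cases i <;> fin_cases j <;>
    simp [BAr, Binv, Pr, Matrix.mul_apply, Fin.sum_univ_succ, Matrix.vecHead, Matrix.vecTail] <;> ring_nf <;> (try simp only [hu8, hu7, hu6, hu5, hu4, hu3, hu2]) <;> (try ring_nf)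


set_option maxHeartbeats 2000000 in
lemma hBX : Pr * Ainv = BXr := by
  ext i j
  fin_cases i <;> fin_cases j <;>
    simp [Pr, Ainv, BXr, Matrix.mul_apply, Fin.sum_univ_succ, Matrix.vecHead, Matrix.vecTail] <;> ring_nf <;> (try simp only [hu8, hu7, hu6, hu5, hu4, hu3, hu2]) <;> (try ring_nf)


set_option maxHeartbeats 1000000 in
lemma hBr : B5 = Br := by
  ext i j
  fin_cases i <;> fin_cases j <;>
    simp [B5, Br] <;> ring_nf <;> (try simp only [hu8, hu7, hu6, hu5, hu4, hu3, hu2]) <;> (try ring_nf)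


noncomputable def Mt (t : ℂ) : Matrix (Fin 5) (Fin 5) ℂ :=
  !![
    9 + 9*u41 + (-8)*t + 7*t*u41 + (-1)*t^2, 6 + 3*u41 + 11*t + 5*t*u41 + (-1)*t^2*u41, 3 + 7*t + 3*t*u41 + t^2 + t^2*u41, 1 + (-1)*u41 + (-1)*t + (-1)*t*u41 + (-1)*t^2, (-1)*u41 + (-2)*t + (-2)*t*u41 + (-1)*t^2*u41;
    (-24) + (-12)*u41 + 24*t + (-20)*t*u41, (-12) + 3*u41 + (-19)*t + (-11)*t*u41 + (-1)*t^2, (-2) + 8*u41 + (-16)*t + (-2)*t*u41 + (-2)*t^2*u41, 3 + 7*u41 + 6*t*u41 + 3*t^2 + 3*t^2*u41, 4 + 4*u41 + 4*t + 4*t*u41 + (-4)*t^2;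
    18 + (-18)*t + 24*t*u41, 3 + (-12)*u41 + 15*t + 12*t*u41, (-7) + (-12)*u41 + 15*t + (-1)*t^2, (-9) + (-6)*u41 + (-9)*t*u41 + (-3)*t^2*u41, (-6) + (-6)*t + (-6)*t*u41 + 6*t^2 + 6*t^2*u41;
    (-4) + 4*u41 + 4*t + (-12)*t*u41, 3 + 7*u41 + (-6)*t + (-6)*t*u41, 6 + 4*u41 + (-6)*t, 4 + (-1)*u41 + t + 5*t*u41 + (-1)*t^2, (-4)*u41 + 4*t + 4*t*u41 + (-4)*t^2*u41;
    (-1)*u41 + 2*t*u41, (-1) + (-1)*u41 + t + t*u41, (-1) + t, u41 + (-1)*t*u41, 1 + u41 + (-1)*t*u41 + (-1)*t^2]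

set_option maxHeartbeats 1000000 in
lemma hMt (t : ℂ) : t • (1 : Matrix (Fin 5) (Fin 5) ℂ) - Xr + t • XBr - t^2 • Br + t • BXr
    = Mt t := by
  ext i j
  fin_cases i <;> fin_cases j <;>
    simp [Xr, XBr, Br, BXr, Mt, Matrix.one_apply, Matrix.vecHead, Matrix.vecTail] <;> ring


noncomputable def N0 (t : ℂ) : Matrix (Fin 4) (Fin 4) ℂ :=
  !![
    (-12) + 3*u41 + (-19)*t + (-11)*t*u41 + (-1)*t^2, (-2) + 8*u41 + (-16)*t + (-2)*t*u41 + (-2)*t^2*u41, 3 + 7*u41 + 6*t*u41 + 3*t^2 + 3*t^2*u41, 4 + 4*u41 + 4*t + 4*t*u41 + (-4)*t^2;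
    3 + (-12)*u41 + 15*t + 12*t*u41, (-7) + (-12)*u41 + 15*t + (-1)*t^2, (-9) + (-6)*u41 + (-9)*t*u41 + (-3)*t^2*u41, (-6) + (-6)*t + (-6)*t*u41 + 6*t^2 + 6*t^2*u41;
    3 + 7*u41 + (-6)*t + (-6)*t*u41, 6 + 4*u41 + (-6)*t, 4 + (-1)*u41 + t + 5*t*u41 + (-1)*t^2, (-4)*u41 + 4*t + 4*t*u41 + (-4)*t^2*u41;
    (-1) + (-1)*u41 + t + t*u41, (-1) + t, u41 + (-1)*t*u41, 1 + u41 + (-1)*t*u41 + (-1)*t^2]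

noncomputable def N1 (t : ℂ) : Matrix (Fin 4) (Fin 4) ℂ :=
  !![
    (-24) + (-12)*u41 + 24*t + (-20)*t*u41, (-2) + 8*u41 + (-16)*t + (-2)*t*u41 + (-2)*t^2*u41, 3 + 7*u41 + 6*t*u41 + 3*t^2 + 3*t^2*u41, 4 + 4*u41 + 4*t + 4*t*u41 + (-4)*t^2;
    18 + (-18)*t + 24*t*u41, (-7) + (-12)*u41 + 15*t + (-1)*t^2, (-9) + (-6)*u41 + (-9)*t*u41 + (-3)*t^2*u41, (-6) + (-6)*t + (-6)*t*u41 + 6*t^2 + 6*t^2*u41;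
    (-4) + 4*u41 + 4*t + (-12)*t*u41, 6 + 4*u41 + (-6)*t, 4 + (-1)*u41 + t + 5*t*u41 + (-1)*t^2, (-4)*u41 + 4*t + 4*t*u41 + (-4)*t^2*u41;
    (-1)*u41 + 2*t*u41, (-1) + t, u41 + (-1)*t*u41, 1 + u41 + (-1)*t*u41 + (-1)*t^2]

noncomputable def N2 (t : ℂ) : Matrix (Fin 4) (Fin 4) ℂ :=
  !![
    (-24) + (-12)*u41 + 24*t + (-20)*t*u41, (-12) + 3*u41 + (-19)*t + (-11)*t*u41 + (-1)*t^2, 3 + 7*u41 + 6*t*u41 + 3*t^2 + 3*t^2*u41, 4 + 4*u41 + 4*t + 4*t*u41 + (-4)*t^2;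
    18 + (-18)*t + 24*t*u41, 3 + (-12)*u41 + 15*t + 12*t*u41, (-9) + (-6)*u41 + (-9)*t*u41 + (-3)*t^2*u41, (-6) + (-6)*t + (-6)*t*u41 + 6*t^2 + 6*t^2*u41;
    (-4) + 4*u41 + 4*t + (-12)*t*u41, 3 + 7*u41 + (-6)*t + (-6)*t*u41, 4 + (-1)*u41 + t + 5*t*u41 + (-1)*t^2, (-4)*u41 + 4*t + 4*t*u41 + (-4)*t^2*u41;
    (-1)*u41 + 2*t*u41, (-1) + (-1)*u41 + t + t*u41, u41 + (-1)*t*u41, 1 + u41 + (-1)*t*u41 + (-1)*t^2]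

noncomputable def N3 (t : ℂ) : Matrix (Fin 4) (Fin 4) ℂ :=
  !![
    (-24) + (-12)*u41 + 24*t + (-20)*t*u41, (-12) + 3*u41 + (-19)*t + (-11)*t*u41 + (-1)*t^2, (-2) + 8*u41 + (-16)*t + (-2)*t*u41 + (-2)*t^2*u41, 4 + 4*u41 + 4*t + 4*t*u41 + (-4)*t^2;
    18 + (-18)*t + 24*t*u41, 3 + (-12)*u41 + 15*t + 12*t*u41, (-7) + (-12)*u41 + 15*t + (-1)*t^2, (-6) + (-6)*t + (-6)*t*u41 + 6*t^2 + 6*t^2*u41;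
    (-4) + 4*u41 + 4*t + (-12)*t*u41, 3 + 7*u41 + (-6)*t + (-6)*t*u41, 6 + 4*u41 + (-6)*t, (-4)*u41 + 4*t + 4*t*u41 + (-4)*t^2*u41;
    (-1)*u41 + 2*t*u41, (-1) + (-1)*u41 + t + t*u41, (-1) + t, 1 + u41 + (-1)*t*u41 + (-1)*t^2]

noncomputable def N4 (t : ℂ) : Matrix (Fin 4) (Fin 4) ℂ :=
  !![
    (-24) + (-12)*u41 + 24*t + (-20)*t*u41, (-12) + 3*u41 + (-19)*t + (-11)*t*u41 + (-1)*t^2, (-2) + 8*u41 + (-16)*t + (-2)*t*u41 + (-2)*t^2*u41, 3 + 7*u41 + 6*t*u41 + 3*t^2 + 3*t^2*u41;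
    18 + (-18)*t + 24*t*u41, 3 + (-12)*u41 + 15*t + 12*t*u41, (-7) + (-12)*u41 + 15*t + (-1)*t^2, (-9) + (-6)*u41 + (-9)*t*u41 + (-3)*t^2*u41;
    (-4) + 4*u41 + 4*t + (-12)*t*u41, 3 + 7*u41 + (-6)*t + (-6)*t*u41, 6 + 4*u41 + (-6)*t, 4 + (-1)*u41 + t + 5*t*u41 + (-1)*t^2;
    (-1)*u41 + 2*t*u41, (-1) + (-1)*u41 + t + t*u41, (-1) + t, u41 + (-1)*t*u41]

lemma hsub0 (t : ℂ) : (Mt t).submatrix Fin.succ (((0:Fin 5)).succAbove) = N0 t := by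
  ext i k
  fin_cases i <;> fin_cases k <;> rfl

lemma hsub1 (t : ℂ) : (Mt t).submatrix Fin.succ (((1:Fin 5)).succAbove) = N1 t := by
  ext i k
  fin_cases i <;> fin_cases k <;> rfl

lemma hsub2 (t : ℂ) : (Mt t).submatrix Fin.succ (((2:Fin 5)).succAbove) = N2 t := by
  ext i k
  fin_cases i <;> fin_cases k <;> rfl

lemma hsub3 (t : ℂ) : (Mt t).submatrix Fin.succ (((3:Fin 5)).succAbove) = N3 t := by
  ext i k
  fin_cases i <;> fin_cases k <;> rfl

lemma hsub4 (t : ℂ) : (Mt t).submatrix Fin.succ (((4:Fin 5)).succAbove) = N4 t := by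
  ext i k
  fin_cases i <;> fin_cases k <;> rfl

set_option maxHeartbeats 1000000 in
lemma hN0 (t : ℂ) : det (N0 t) = (-1) + (-1)*u41 + 7*t + (-2)*t*u41 + (-26)*t^2 + (-38)*t^2*u41 + (-77)*t^3 + (-49)*t^3*u41 + 83*t^4*u41 + 77*t^5 + 28*t^5*u41 + 26*t^6 + (-12)*t^6*u41 + (-7)*t^7 + (-9)*t^7*u41 + t^8 := by
  rw [det_fin_four]
  simp only [N0, Matrix.of_apply, vA, vB, vC, vD, wA, wB, wC, wD, wE]
  linear_combination (18 + 36*u41 + 24*u41^2 + (-40)*t + (-82)*t*u41 + (-24)*t*u41^2 + 30*t^2 + 18*t^2*u41 + (-6)*t^2*u41^2 + 50*t^3 + 50*t^3*u41 + (-6)*t^3*u41^2 + 62*t^4 + (-14)*t^4*u41 + (-18)*t^4*u41^2 + (-52)*t^5 + (-12)*t^5*u41 + 6*t^5*u41^2 + (-94)*t^6 + (-56)*t^6*u41 + 26*t^7 + 60*t^7*u41 + 24*t^7*u41^2 : ℂ) * hu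

set_option maxHeartbeats 1000000 in
lemma hN1 (t : ℂ) : det (N1 t) = (-4)*u41 + 48*t + 48*t*u41 + (-176)*t^2 + (-156)*t^2*u41 + 288*t^3 + 244*t^3*u41 + 136*t^4 + 532*t^4*u41 + 648*t^5 + (-88)*t^5*u41 + (-24)*t^6 + (-84)*t^6*u41 + (-24)*t^7 + (-44)*t^7*u41 := by
  rw [det_fin_four]
  simp only [N1, Matrix.of_apply, vA, vB, vC, vD, wA, wB, wC, wD, wE]
  linear_combination (48 + 120*u41 + 96*u41^2 + (-180)*t + (-424)*t*u41 + (-24)*t*u41^2 + 404*t^2 + 240*t^2*u41 + 84*t^2*u41^2 + (-540)*t^3 + (-124)*t^3*u41 + 12*t^3*u41^2 + 32*t^4 + 292*t^4*u41 + 36*t^4*u41^2 + (-804)*t^5 + 12*t^5*u41 + 12*t^5*u41^2 + 156*t^6 + 100*t^6*u41 + 24*t^6*u41^2 + (-12)*t^7 + 72*t^7*u41 + 48*t^7*u41^2 : ℂ) * hu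

set_option maxHeartbeats 1000000 in
lemma hN2 (t : ℂ) : det (N2 t) = 6 + 12*t + 72*t*u41 + (-156)*t^2 + (-258)*t^2*u41 + 246*t^3 + 768*t^3*u41 + 630*t^4 + 612*t^4*u41 + 840*t^5 + (-192)*t^5*u41 + (-192)*t^6 + (-306)*t^6*u41 + (-42)*t^7 + (-24)*t^7*u41 := by
  rw [det_fin_four]
  simp only [N2, Matrix.of_apply, vA, vB, vC, vD, wA, wB, wC, wD, wE]
  linear_combination (48 + 144*u41 + 144*u41^2 + (-102)*t + (-636)*t*u41 + 354*t^2 + 360*t^2*u41 + 180*t^2*u41^2 + (-624)*t^3 + (-396)*t^3*u41 + 12*t^3*u41^2 + (-360)*t^4 + 612*t^4*u41 + 108*t^4*u41^2 + (-930)*t^5 + 24*t^5*u41 + (-36)*t^5*u41^2 + 246*t^6 + 300*t^6*u41 + 24*t^6*u41^2 + 24*t^7 + 24*t^7*u41 : ℂ) * hu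

set_option maxHeartbeats 1000000 in
lemma hN3 (t : ℂ) : det (N3 t) = 4 + 4*u41 + (-16)*t + 16*t*u41 + (-76)*t^2 + (-112)*t^2*u41 + (-20)*t^3 + 492*t^3*u41 + 860*t^4 + 684*t^4*u41 + 368*t^5 + (-480)*t^5*u41 + (-212)*t^6 + (-160)*t^6*u41 + (-12)*t^7 + 4*t^7*u41 := by
  rw [det_fin_four]
  simp only [N3, Matrix.of_apply, vA, vB, vC, vD, wA, wB, wC, wD, wE]
  linear_combination (24 + 72*u41 + 96*u41^2 + 20*t + (-424)*t*u41 + 24*t*u41^2 + 144*t^2 + 172*t^2*u41 + 132*t^2*u41^2 + (-364)*t^3 + (-216)*t^3*u41 + 24*t^3*u41^2 + (-428)*t^4 + 420*t^4*u41 + 60*t^4*u41^2 + (-544)*t^5 + 112*t^5*u41 + (-48)*t^5*u41^2 + 244*t^6 + 152*t^6*u41 + 8*t^7 : ℂ) * hu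

set_option maxHeartbeats 1000000 in
lemma hN4 (t : ℂ) : det (N4 t) = u41 + 3*t*u41 + (-46)*t^2 + (-57)*t^2*u41 + (-24)*t^3 + 212*t^3*u41 + 364*t^4 + 171*t^4*u41 + (-24)*t^5 + (-209)*t^5*u41 + (-46)*t^6 + (-11)*t^6*u41 + 2*t^7*u41 := by
  rw [det_fin_four]
  simp only [N4, Matrix.of_apply, vA, vB, vC, vD, wA, wB, wC, wD, wE]
  linear_combination (6 + 12*u41 + 24*u41^2 + 36*t + (-118)*t*u41 + (-20)*t^2 + 50*t^2*u41 + 42*t^2*u41^2 + (-36)*t^3 + (-68)*t^3*u41 + 12*t^3*u41^2 + (-202)*t^4 + 134*t^4*u41 + 18*t^4*u41^2 + (-72)*t^5 + 38*t^5*u41 + (-24)*t^5*u41^2 + 64*t^6 + 24*t^6*u41 : ℂ) * hu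

set_option maxHeartbeats 2000000 in
lemma keydet (t : ℂ) : det (Mt t) =
    -((t-1)^6 * (t ^ 4 - 9 * t ^ 3 + 44 * t ^ 2 - 9 * t + 1)) := by
  rw [det_fin_five_exp, hsub0, hsub1, hsub2, hsub3, hsub4, hN0, hN1, hN2, hN3, hN4]
  simp only [Mt, Matrix.of_apply, vA, vB, vC, vD, wA, wB, wC, wD, wE]
  linear_combination (6 + (-134)*t + 38*t^2 + (-1034)*t^3 + 116*t^4 + 1144*t^5 + 966*t^6 + (-738)*t^7 + (-294)*t^8 + (-70)*t^9 : ℂ) * hu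

set_option maxRecDepth 100000 in
set_option maxHeartbeats 1000000 in
lemma detD (t : ℂ) : det (t • Br - 1) = (t - 1)^5 := by
  simp only [det_succ_row_zero, Fin.sum_univ_succ, Fin.sum_univ_zero, Finset.univ_unique,
    Finset.sum_singleton, submatrix_apply, submatrix_submatrix, Function.comp_def,
    Function.comp_apply, Fin.zero_succAbove, Fin.succ_succAbove_zero, Fin.succ_succAbove_succ,
    det_unique, Fin.default_eq_zero, Fin.val_zero, Fin.val_succ, Matrix.sub_apply,
    Matrix.smul_apply, Matrix.one_apply, smul_eq_mul, Br, Matrix.cons_val', Matrix.cons_val_zero,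
    Matrix.cons_val_succ, Matrix.empty_val', Matrix.cons_val_fin_one, Matrix.of_apply,
    Fin.succ_zero_eq_one]
  simp [Fin.ext_iff, Fin.succAbove, Fin.lt_def]
  ring

theorem twisted_alexander_rho5 :
    ∀ t : ℂ, t ≠ 0 → t ≠ 1 →
      det ((1 : Matrix (Fin 5) (Fin 5) ℂ) - t⁻¹ • (A5 * B5⁻¹ * A5⁻¹) +
          A5 * B5⁻¹ * A5⁻¹ * B5 - t • B5 + B5 * A5 * B5⁻¹ * A5⁻¹) /
        det (t • B5 - 1) =
      -(1 / t ^ 5) * (t - 1) * (t ^ 4 - 9 * t ^ 3 + 44 * t ^ 2 - 9 * t + 1) := by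
  intro t ht ht1
  rw [hB5inv, hA5inv, hW, hX, hXB, hBA, hP, hBX, hBr]
  have hD0 : det (t • Br - 1) ≠ 0 := by
    rw [detD]; exact pow_ne_zero _ (sub_ne_zero.mpr ht1)
  rw [div_eq_iff hD0, detD]
  have hsm : t • ((1 : Matrix (Fin 5) (Fin 5) ℂ) - t⁻¹ • Xr + XBr - t • Br + BXr) = Mt t := by
    rw [← hMt]
    ext i j
    simp only [Matrix.add_apply, Matrix.sub_apply, Matrix.smul_apply, smul_eq_mul]
    field_simp
  have h1 : det (t • ((1 : Matrix (Fin 5) (Fin 5) ℂ) - t⁻¹ • Xr + XBr - t • Br + BXr)) =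
      t^5 * det ((1 : Matrix (Fin 5) (Fin 5) ℂ) - t⁻¹ • Xr + XBr - t • Br + BXr) := by
    rw [det_smul]; norm_num
  rw [hsm, keydet] at h1
  have ht5 : (t:ℂ)^5 ≠ 0 := pow_ne_zero _ ht
  apply mul_left_cancel₀ ht5
  rw [← h1]
  field_simp
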